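/- Let f = e^{−ψ} : ℝ^d → [0,∞) be an upper semi-continuous log-concave function whose support contains the origin in its interior, let u ∈ supp f, and let (v, ν) with ν ≠ 0 be given. Then the following are equivalent: (1) (v, ν) belongs to the Fréchet normal cone of the lifting L_f at (u, f(u)) and ⟨(u, f(u)), (v, ν)⟩ = 1; (2) there exists p ∈ ∂ψ(u) with 1 + ⟨p, u⟩ > 0 such that (v, ν) = (p, 1/f(u)) / (1 + ⟨p, u⟩). -/

import Mathlib

noncomputable section

/-- The Fréchet normal cone of a set `A ⊆ ℝ^d × ℝ` at a point `p`. -/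
def normalConePair {d : ℕ} (A : Set ((Fin d → ℝ) × ℝ)) (p : (Fin d → ℝ) × ℝ) :
    Set ((Fin d → ℝ) × ℝ) :=
  {v | ∀ ε > (0 : ℝ), ∃ δ > (0 : ℝ), ∀ a ∈ A, ‖a - p‖ ≤ δ →
      dotProduct v.1 (a.1 - p.1) + v.2 * (a.2 - p.2) ≤ ε * ‖a - p‖}

/-- The lifting `L_f = {(x,y) : x ∈ cl(supp f), |y| ≤ f(x)}` of a function. -/
def lifting {d : ℕ} (f : (Fin d → ℝ) → ℝ) : Set ((Fin d → ℝ) × ℝ) :=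
  {p | p.1 ∈ closure {x | 0 < f x} ∧ |p.2| ≤ f p.1}

lemma abs_dot_le' {d : ℕ} (p w : Fin d → ℝ) :
    |dotProduct p w| ≤ (∑ i, |p i|) * ‖w‖ := by
  rw [Finset.sum_mul, dotProduct]
  refine (Finset.abs_sum_le_sum_abs _ _).trans (Finset.sum_le_sum fun i _ => ?_)
  rw [abs_mul]
  exact mul_le_mul_of_nonneg_left ((Real.norm_eq_abs _ ▸ norm_le_pi_norm w i)) (abs_nonneg _)

set_option maxHeartbeats 1600000 in
theorem nonhorizontal_normals_via_subgradients {d : ℕ} (f : (Fin d → ℝ) → ℝ)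
    (hf0 : ∀ x, 0 ≤ f x) (hfusc : UpperSemicontinuous f)
    (hflc : ∀ x y : Fin d → ℝ, ∀ t : ℝ, 0 ≤ t → t ≤ 1 →
      f x ^ t * f y ^ (1 - t) ≤ f (t • x + (1 - t) • y))
    (h0 : (0 : Fin d → ℝ) ∈ interior {x | 0 < f x})
    (u : Fin d → ℝ) (hu : 0 < f u) (v : Fin d → ℝ) (ν : ℝ) (hν : ν ≠ 0) :
    ((v, ν) ∈ normalConePair (lifting f) (u, f u) ∧
        dotProduct u v + f u * ν = 1) ↔
      ∃ p : Fin d → ℝ,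
        (∀ y, 0 < f y →
          -Real.log (f u) + dotProduct p (y - u) ≤ -Real.log (f y)) ∧
        0 < 1 + dotProduct p u ∧
        v = (1 + dotProduct p u)⁻¹ • p ∧
        ν = ((1 + dotProduct p u) * f u)⁻¹ := by
  constructor
  · rintro ⟨hnc, hip⟩
    -- Step 1: ν > 0
    have hν0 : 0 < ν := by
      rcases lt_or_gt_of_ne hν with hlt | hgt
      · exfalso
        obtain ⟨δ, hδ, H⟩ := hnc (-ν / 2) (by linarith)
        set s : ℝ := min δ (f u) with hs
        have hsδ : s ≤ δ := min_le_left _ _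
        have hsf : s ≤ f u := min_le_right _ _
        have hs0 : 0 < s := lt_min hδ hu
        have hmem : ((u, f u - s) : (Fin d → ℝ) × ℝ) ∈ lifting f := by
          refine ⟨subset_closure hu, ?_⟩
          show |f u - s| ≤ f u
          rw [abs_le]
          constructor <;> linarith
        have hnorm : ‖((u, f u - s) : (Fin d → ℝ) × ℝ) - (u, f u)‖ = s := by
          rw [Prod.mk_sub_mk, Prod.norm_def]
          simp only [sub_self, norm_zero]
          rw [show f u - s - f u = -s by ring, norm_neg, Real.norm_eq_abs,
            abs_of_nonneg hs0.le, max_eq_right hs0.le]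
        have h := H _ hmem (by rw [hnorm]; exact hsδ)
        rw [hnorm] at h
        have h2 : ν * (f u - s - f u) ≤ -ν / 2 * s := by simpa using h
        nlinarith
      · exact hgt
    set c : ℝ := ν * f u with hc
    have hc0 : 0 < c := mul_pos hν0 hu
    have hvu : dotProduct v u = 1 - f u * ν := by
      rw [dotProduct_comm]; linarith
    have h1pu : 1 + dotProduct (c⁻¹ • v) u = c⁻¹ := by
      rw [smul_dotProduct, smul_eq_mul, hvu, hc]
      field_simp
      ring
    refine ⟨c⁻¹ • v, ?_, ?_, ?_, ?_⟩
    · -- subgradient property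
      intro y hfy
      set L : ℝ := Real.log (f y) - Real.log (f u) with hL
      have key : dotProduct v (y - u) + ν * (f u * L) ≤ 0 := by
        set D : ℝ := ‖y - u‖ + 2 * f u * |L| + 1 with hD
        have hD0 : 0 < D := by positivity
        set S : ℝ := dotProduct v (y - u) + ν * (f u * L) with hS
        have main : ∀ ε > (0 : ℝ), S ≤ ε * D := by
          intro ε hε
          obtain ⟨δ, hδ, H⟩ := hnc ε hε
          set t : ℝ := min (δ / D) (1 / (|L| + 1)) with htdef
          have ht0 : 0 < t := lt_min (div_pos hδ hD0) (by positivity)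
          have ht1 : t ≤ 1 := by
            refine (min_le_right _ _).trans ?_
            rw [div_le_one (by positivity)]
            linarith [abs_nonneg L]
          have htL : t * |L| ≤ 1 := by
            calc t * |L| ≤ 1 / (|L| + 1) * |L| :=
                  mul_le_mul_of_nonneg_right (min_le_right _ _) (abs_nonneg L)
              _ ≤ 1 := by
                  rw [div_mul_eq_mul_div, div_le_one (by positivity)]
                  linarith [abs_nonneg L]
          have htL' : |t * L| ≤ 1 := by
            rw [abs_mul, abs_of_pos ht0]; exact htL
          have htD : t * D ≤ δ := by
            calc t * D ≤ δ / D * D := mul_le_mul_of_nonneg_right (min_le_left _ _) hD0.le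
              _ = δ := div_mul_cancel₀ _ hD0.ne'
          set x : Fin d → ℝ := u + t • (y - u) with hx
          have heq : f u * Real.exp (t * L) = f y ^ t * f u ^ (1 - t) := by
            rw [Real.rpow_def_of_pos hfy, Real.rpow_def_of_pos hu, ← Real.exp_add]
            conv_lhs => rw [← Real.exp_log hu]
            rw [← Real.exp_add]
            congr 1
            rw [hL]; ring
          have hfx : f u * Real.exp (t * L) ≤ f x := by
            have h := hflc y u t ht0.le ht1
            rw [show t • y + (1 - t) • u = x by rw [hx]; module] at h
            exact heq.le.trans h
          have hfx0 : 0 < f x := lt_of_lt_of_le (by positivity) hfx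
          have hmem : ((x, f u * Real.exp (t * L)) : (Fin d → ℝ) × ℝ) ∈ lifting f := by
            refine ⟨subset_closure hfx0, ?_⟩
            show |f u * Real.exp (t * L)| ≤ f x
            rw [abs_of_pos (by positivity)]
            exact hfx
          have hnorm1 : ‖x - u‖ = t * ‖y - u‖ := by
            rw [hx, add_sub_cancel_left, norm_smul, Real.norm_eq_abs, abs_of_pos ht0]
          have hnorm2 : |f u * Real.exp (t * L) - f u| ≤ 2 * (t * |L|) * f u := by
            rw [show f u * Real.exp (t * L) - f u = (Real.exp (t * L) - 1) * f u by ring,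
              abs_mul, abs_of_pos hu]
            have hb := Real.abs_exp_sub_one_le htL'
            rw [abs_mul, abs_of_pos ht0] at hb
            exact mul_le_mul_of_nonneg_right hb hu.le
          have hna : ‖((x, f u * Real.exp (t * L)) : (Fin d → ℝ) × ℝ) - (u, f u)‖ ≤ t * D := by
            rw [Prod.mk_sub_mk, Prod.norm_def]
            apply max_le
            · show ‖x - u‖ ≤ t * D
              rw [hnorm1, hD]
              have h1 : (0:ℝ) ≤ 2 * f u * |L| + 1 := by positivity
              nlinarith
            · show ‖f u * Real.exp (t * L) - f u‖ ≤ t * D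
              rw [Real.norm_eq_abs]
              refine hnorm2.trans ?_
              rw [hD]
              nlinarith [norm_nonneg (y - u), abs_nonneg L, ht0.le, hu.le]
          have hH := H _ hmem (hna.trans htD)
          have hfst : ((x, f u * Real.exp (t * L)) : (Fin d → ℝ) × ℝ).1 -
              ((u, f u) : (Fin d → ℝ) × ℝ).1 = t • (y - u) := by
            show x - u = _
            rw [hx, add_sub_cancel_left]
          have hsnd : ((x, f u * Real.exp (t * L)) : (Fin d → ℝ) × ℝ).2 -
              ((u, f u) : (Fin d → ℝ) × ℝ).2 = f u * (Real.exp (t * L) - 1) := by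
            show f u * Real.exp (t * L) - f u = _
            ring
          rw [hfst, hsnd, dotProduct_smul, smul_eq_mul] at hH
          have hexp : t * L ≤ Real.exp (t * L) - 1 := by
            linarith [Real.add_one_le_exp (t * L)]
          have h2 : ν * (f u * (t * L)) ≤ ν * (f u * (Real.exp (t * L) - 1)) :=
            mul_le_mul_of_nonneg_left (mul_le_mul_of_nonneg_left hexp hu.le) hν0.le
          have hrhs : ε * ‖((x, f u * Real.exp (t * L)) : (Fin d → ℝ) × ℝ) - (u, f u)‖
              ≤ ε * (t * D) := mul_le_mul_of_nonneg_left hna hε.le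
          have hring : t * (ν * (f u * L)) = ν * (f u * (t * L)) := by ring
          have hts : t * S ≤ t * (ε * D) := by
            rw [hS, mul_add, hring, show t * (ε * D) = ε * (t * D) by ring]
            linarith
          exact le_of_mul_le_mul_left hts ht0
        refine le_of_forall_pos_le_add fun η hη => ?_
        have h := main (η / D) (div_pos hη hD0)
        rw [div_mul_cancel₀ _ hD0.ne'] at h
        linarith
      rw [smul_dotProduct, smul_eq_mul]
      have hring : ν * f u * L = ν * (f u * L) := by ring
      have h1 : dotProduct v (y - u) ≤ -(c * L) := by
        rw [hc, hring]; linarith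
      have h2 : c⁻¹ * dotProduct v (y - u) ≤ -L := by
        have h3 := mul_le_mul_of_nonneg_left h1 (inv_nonneg.mpr hc0.le)
        rwa [show c⁻¹ * -(c * L) = -L by field_simp] at h3
      rw [hL] at h2
      linarith
    · rw [h1pu]; exact inv_pos.mpr hc0
    · rw [h1pu, inv_inv, smul_smul, mul_inv_cancel₀ hc0.ne', one_smul]
    · rw [h1pu, hc]
      field_simp
  · rintro ⟨p, hsub, hcpos, hv, hν'⟩
    set c : ℝ := 1 + dotProduct p u with hcdef
    constructor
    · intro ε hε
      set C : ℝ := ∑ i, |p i| with hC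
      have hC0 : 0 ≤ C := Finset.sum_nonneg fun i _ => abs_nonneg _
      refine ⟨min (1 / (C + 1)) (ε * c / (C ^ 2 + 1)),
        lt_min (by positivity) (by positivity), ?_⟩
      rintro ⟨x, y⟩ ⟨hxcl, hyx⟩ hnear
      set N : ℝ := ‖((x, y) : (Fin d → ℝ) × ℝ) - (u, f u)‖ with hN
      have hN0 : 0 ≤ N := norm_nonneg _
      have hxu : ‖x - u‖ ≤ N := by
        have h := norm_fst_le (((x, y) : (Fin d → ℝ) × ℝ) - (u, f u))
        exact h
      set t : ℝ := dotProduct p (x - u) with htdef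
      have habs : |t| ≤ C * ‖x - u‖ := abs_dot_le' p (x - u)
      have hxu1 : ‖x - u‖ ≤ 1 / (C + 1) :=
        hxu.trans (hnear.trans (min_le_left _ _))
      have hxu2 : ‖x - u‖ ≤ ε * c / (C ^ 2 + 1) :=
        hxu.trans (hnear.trans (min_le_right _ _))
      have ht1 : |t| ≤ 1 := by
        calc |t| ≤ C * ‖x - u‖ := habs
          _ ≤ C * (1 / (C + 1)) := mul_le_mul_of_nonneg_left hxu1 hC0
          _ ≤ 1 := by rw [mul_one_div, div_le_one (by positivity)]; linarith
      have hfxle : f x ≤ f u * Real.exp (-t) := by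
        rcases (hf0 x).lt_or_eq with hfx | hfx
        · have h := hsub x hfx
          rw [← htdef] at h
          have hlog : Real.log (f x) ≤ Real.log (f u) + -t := by linarith
          calc f x = Real.exp (Real.log (f x)) := (Real.exp_log hfx).symm
            _ ≤ Real.exp (Real.log (f u) + -t) := Real.exp_le_exp.mpr hlog
            _ = f u * Real.exp (-t) := by rw [Real.exp_add, Real.exp_log hu]
        · rw [← hfx]; positivity
      have hyle : y - f u ≤ f u * (Real.exp (-t) - 1) := by
        have hy : y ≤ f x := (le_abs_self y).trans hyx
        nlinarith
      have hq : Real.exp (-t) - 1 + t ≤ t ^ 2 := by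
        have h := Real.abs_exp_sub_one_sub_id_le (x := -t) (by rwa [abs_neg])
        rw [neg_sq] at h
        have h2 := (abs_le.mp h).2
        linarith
      have hfrac : C ^ 2 / (C ^ 2 + 1) ≤ 1 := by
        rw [div_le_one (by positivity)]; linarith
      show dotProduct v (x - u) + ν * (y - f u) ≤ ε * N
      rw [hv, hν', smul_dotProduct, smul_eq_mul, ← htdef]
      calc c⁻¹ * t + (c * f u)⁻¹ * (y - f u)
          ≤ c⁻¹ * t + (c * f u)⁻¹ * (f u * (Real.exp (-t) - 1)) := by
            have h0 : (0:ℝ) ≤ (c * f u)⁻¹ := by positivity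
            have h1 := mul_le_mul_of_nonneg_left hyle h0
            linarith
        _ = c⁻¹ * (t + (Real.exp (-t) - 1)) := by
            rw [mul_inv]
            field_simp
        _ ≤ c⁻¹ * t ^ 2 := by
            apply mul_le_mul_of_nonneg_left _ (by positivity)
            linarith
        _ ≤ c⁻¹ * (C * ‖x - u‖) ^ 2 := by
            apply mul_le_mul_of_nonneg_left _ (by positivity)
            calc t ^ 2 = |t| ^ 2 := (sq_abs t).symm
              _ ≤ (C * ‖x - u‖) ^ 2 := by
                  apply pow_le_pow_left₀ (abs_nonneg t) habs
        _ = c⁻¹ * C ^ 2 * (‖x - u‖ * ‖x - u‖) := by ring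
        _ ≤ c⁻¹ * C ^ 2 * (ε * c / (C ^ 2 + 1) * N) := by
            apply mul_le_mul_of_nonneg_left _ (by positivity)
            exact mul_le_mul hxu2 hxu (norm_nonneg _) (by positivity)
        _ = ε * N * (C ^ 2 / (C ^ 2 + 1)) := by
            field_simp
        _ ≤ ε * N * 1 := mul_le_mul_of_nonneg_left hfrac (by positivity)
        _ = ε * N := mul_one _
    · rw [hv, hν', dotProduct_smul, smul_eq_mul, dotProduct_comm]
      have hpu : dotProduct p u = c - 1 := by rw [hcdef]; ring
      rw [hpu]
      field_simp
      ring
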